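/- Let ν₀ ∈ 𝕊^{N-1} and τ₀ ∈ (0,1]. Then there exists γ ∈ (0,1) such that for every x ∈ ∂B₁((1-γ)e_N) with x_N ≥ 0, the set Σ_{ν₀,τ₀}(x) ∩ B₁((1-γ)e_N) ∩ ℝ^N_+ has positive Lebesgue measure. -/

import Mathlib

open MeasureTheory
open scoped RealInnerProductSpace

private lemma stmt17_keyB (τ₀ γ μ q s : ℝ) (hτ₀0 : 0 < τ₀) (hτ₀1 : τ₀ ≤ 1)
    (hγ : γ = τ₀^2/100) (hμ : μ = 1 + 2/τ₀) (hq0 : 0 ≤ q) (hq2 : q ≤ 2)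
    (hρ : (s - q/2)^2 ≤ γ/2) :
    0 < (μ - q) * s + (2 - γ) := by
  have hμτ : μ * τ₀ = τ₀ + 2 := by rw [hμ]; field_simp
  have hμ3 : 3 ≤ μ := by
    rw [hμ]
    have : 2 ≤ 2/τ₀ := by rw [le_div_iff₀ hτ₀0]; linarith
    linarith
  have hγ1 : γ ≤ 1/100 := by rw [hγ]; nlinarith
  have hγ0 : 0 < γ := by rw [hγ]; positivity
  rcases le_or_gt 0 s with h | h
  · nlinarith [mul_nonneg (by linarith : (0:ℝ) ≤ μ - q) h]
  · have hsq : s^2 ≤ γ/2 := by nlinarith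
    have h2 : (μ * (-s))^2 ≤ 9/200 := by
      have : μ^2 * γ = (τ₀+2)^2 / 100 := by
        rw [hγ]; field_simp; nlinarith [hμτ]
      nlinarith [sq_nonneg μ, sq_nonneg s, sq_nonneg (τ₀+2)]
    have h3 : μ * (-s) < 1 := by
      nlinarith [mul_pos (by linarith : (0:ℝ) < μ) (by linarith : (0:ℝ) < -s)]
    nlinarith [mul_le_mul_of_nonneg_right (by linarith : μ - q ≤ μ) (by linarith : (0:ℝ) ≤ -s)]

private lemma stmt17_cone (τ₀ μ M V : ℝ) (hτ₀0 : 0 < τ₀) (hτ₀1 : τ₀ ≤ 1)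
    (hμ : μ = 1 + 2/τ₀) (hM0 : 0 ≤ M) (hM4 : M ≤ 4)
    (hV0 : 0 ≤ V) (hV : V^2 = μ^2 + M) :
    (1 - τ₀) * V < μ := by
  have hμτ : μ * τ₀ = τ₀ + 2 := by rw [hμ]; field_simp
  have hμ3 : 3 ≤ μ := by
    rw [hμ]
    have : 2 ≤ 2/τ₀ := by rw [le_div_iff₀ hτ₀0]; linarith
    linarith
  have key : ((1-τ₀) * V)^2 < μ^2 := by
    have h1 : ((1-τ₀)*V)^2 * τ₀^2 < μ^2 * τ₀^2 := by
      have h0 : ((1-τ₀)*V)^2 * τ₀^2 = (1-τ₀)^2 * (μ^2*τ₀^2 + M*τ₀^2) := by rw [mul_pow, hV]; ring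
      rw [h0]
      have h2 : μ^2 * τ₀^2 = (τ₀+2)^2 := by nlinarith [hμτ]
      rw [h2]
      have p1 : (1-τ₀)^2 * M ≤ 4 := by
        nlinarith [mul_nonneg hM0 (by nlinarith : (0:ℝ) ≤ 1 - (1-τ₀)^2)]
      have e1 : (1-τ₀)^2 * (M*τ₀^2) ≤ 4*τ₀^2 := by
        have := mul_le_mul_of_nonneg_right p1 (sq_nonneg τ₀)
        nlinarith
      have e2 : (1-τ₀)^2*(τ₀+2)^2 ≤ (1-τ₀)*(τ₀+2)^2 := by
        nlinarith [mul_nonneg (mul_nonneg (by linarith : (0:ℝ) ≤ 1-τ₀) hτ₀0.le) (sq_nonneg (τ₀+2))]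
      have e3 : 4*τ₀^2 < τ₀*(τ₀+2)^2 := by nlinarith
      nlinarith
    have := mul_pos hτ₀0 hτ₀0
    nlinarith
  nlinarith [mul_nonneg (by linarith : (0:ℝ) ≤ 1-τ₀) hV0]

private lemma stmt17_pos (n : ℕ) (ν₀ x c : EuclideanSpace ℝ (Fin (n+1))) (τ₀ : ℝ)
    (h : ∃ y : EuclideanSpace ℝ (Fin (n+1)),
      (1-τ₀) * ‖y - x‖ < |⟪y - x, ν₀⟫| ∧ y ∈ Metric.ball c 1 ∧ 0 < y (Fin.last n)) :
    0 < volume ({y : EuclideanSpace ℝ (Fin (n+1)) | (1-τ₀) * ‖y - x‖ ≤ |⟪y - x, ν₀⟫|} ∩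
      Metric.ball c 1 ∩ {y | 0 < y (Fin.last n)}) := by
  obtain ⟨y, h1, h2, h3⟩ := h
  have hU : IsOpen ({y : EuclideanSpace ℝ (Fin (n+1)) | (1-τ₀) * ‖y - x‖ < |⟪y - x, ν₀⟫|} ∩
      Metric.ball c 1 ∩ {y | 0 < y (Fin.last n)}) := by
    refine IsOpen.inter (IsOpen.inter ?_ Metric.isOpen_ball) ?_
    · refine isOpen_lt (by fun_prop) (Continuous.abs ?_)
      exact Continuous.inner (continuous_id.sub continuous_const) continuous_const
    · exact isOpen_lt continuous_const (PiLp.continuous_apply _ _ _)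
  refine lt_of_lt_of_le (hU.measure_pos volume ⟨y, ⟨h1, h2⟩, h3⟩) (measure_mono ?_)
  rintro z ⟨⟨hz1, hz2⟩, hz3⟩
  simp only [Set.mem_setOf_eq] at hz1 ⊢
  exact ⟨⟨hz1.le, hz2⟩, hz3⟩


private lemma stmt17_flip (n : ℕ) (ν₀ : EuclideanSpace ℝ (Fin (n+1))) (hν₀ : ‖ν₀‖ = 1)
    (z : EuclideanSpace ℝ (Fin (n+1))) : ∃ ν : EuclideanSpace ℝ (Fin (n+1)),
      ‖ν‖ = 1 ∧ 0 ≤ ⟪z, ν⟫ ∧ ∀ y : EuclideanSpace ℝ (Fin (n+1)), |⟪y, ν⟫| = |⟪y, ν₀⟫| := by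
  rcases le_or_gt 0 ⟪z, ν₀⟫ with h | h
  · exact ⟨ν₀, hν₀, h, fun y => rfl⟩
  · refine ⟨-ν₀, by rw [norm_neg]; exact hν₀, ?_, fun y => by rw [inner_neg_right, abs_neg]⟩
    rw [inner_neg_right]; linarith

set_option maxHeartbeats 1000000 in
private lemma stmt17_caseA (n : ℕ) (τ₀ : ℝ) (hτ₀0 : 0 < τ₀) (hτ₀1 : τ₀ ≤ 1)
    (ν₀ : EuclideanSpace ℝ (Fin (n+1))) (hν₀ : ‖ν₀‖ = 1)
    (x c e w : EuclideanSpace ℝ (Fin (n+1)))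
    (hen : ‖e‖ = 1) (hcoord : ∀ z : EuclideanSpace ℝ (Fin (n+1)), ⟪e, z⟫ = z (Fin.last n))
    (hwdef : w = c - x) (hw : ‖w‖ = 1) (hww : ⟪w, w⟫ = 1)
    (hx0 : 0 < x (Fin.last n)) :
    ∃ y : EuclideanSpace ℝ (Fin (n+1)),
      (1-τ₀) * ‖y - x‖ < |⟪y - x, ν₀⟫| ∧ y ∈ Metric.ball c 1 ∧ 0 < y (Fin.last n) := by
  obtain ⟨ν, hν1, ha, habs⟩ := stmt17_flip n ν₀ hν₀ w
  have hνν : ⟪ν, ν⟫ = 1 := by rw [real_inner_self_eq_norm_sq, hν1]; norm_num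
  obtain ⟨ε, hεdef⟩ : ∃ ε : ℝ, ε = τ₀/2 := ⟨_, rfl⟩
  have hε0 : 0 < ε := by rw [hεdef]; positivity
  have hε1 : ε ≤ 1/2 := by rw [hεdef]; linarith
  obtain ⟨v, hvdef⟩ : ∃ v : EuclideanSpace ℝ (Fin (n+1)), v = ν + ε • w := ⟨_, rfl⟩
  have hvν : ⟪v, ν⟫ = 1 + ε * ⟪w, ν⟫ := by
    rw [hvdef, inner_add_left, real_inner_smul_left, hνν]
  have hwv : ⟪w, v⟫ = ⟪w, ν⟫ + ε := by
    rw [hvdef, inner_add_right, real_inner_smul_right, hww]; ring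
  have hvnorm : ‖v‖ ≤ 1 + ε := by
    rw [hvdef]
    calc ‖ν + ε • w‖ ≤ ‖ν‖ + ‖ε • w‖ := norm_add_le _ _
      _ = 1 + ε := by rw [hν1, norm_smul, hw, Real.norm_eq_abs, abs_of_pos hε0]; ring
  have hvnorm2 : ‖v‖^2 ≤ 9/4 := by nlinarith only [norm_nonneg v, hvnorm, hε1, hε0]
  obtain ⟨t, htdef⟩ : ∃ t : ℝ, t = min (ε/4) (x (Fin.last n) / 4) := ⟨_, rfl⟩
  have ht0 : 0 < t := by rw [htdef]; exact lt_min (by positivity) (by positivity)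
  have htε : t ≤ ε/4 := htdef ▸ min_le_left _ _
  have htx : t ≤ x (Fin.last n) / 4 := htdef ▸ min_le_right _ _
  refine ⟨x + t • v, ?_, ?_, ?_⟩
  · -- cone
    have hyx : x + t • v - x = t • v := by abel
    rw [hyx, ← habs]
    have h1 : ⟪t • v, ν⟫ = t * (1 + ε * ⟪w, ν⟫) := by rw [real_inner_smul_left, hvν]
    have h2 : |⟪t • v, ν⟫| = t * (1 + ε * ⟪w, ν⟫) := by
      rw [h1, abs_of_pos]
      exact mul_pos ht0 (by nlinarith only [mul_nonneg hε0.le ha])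
    rw [h2, norm_smul, Real.norm_eq_abs, abs_of_pos ht0]
    have h3 : (1-τ₀) * ‖v‖ ≤ (1-τ₀) * (1+ε) :=
      mul_le_mul_of_nonneg_left hvnorm (by linarith)
    have h4 : (1-τ₀) * (1+ε) < 1 := by rw [hεdef]; nlinarith only [hτ₀0, hτ₀1]
    nlinarith only [mul_nonneg (mul_nonneg ht0.le hε0.le) ha, h3, h4, ht0, mul_le_mul_of_nonneg_left h3 ht0.le, mul_lt_mul_of_pos_left h4 ht0]
  · -- ball
    rw [Metric.mem_ball, dist_eq_norm]
    have hyc : x + t • v - c = -w + t • v := by rw [hwdef]; abel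
    have hsq : ‖x + t • v - c‖^2 = 1 - 2*t*⟪w,v⟫ + t^2*‖v‖^2 := by
      rw [hyc, norm_add_sq_real, real_inner_smul_right, inner_neg_left, norm_neg, hw,
        norm_smul, Real.norm_eq_abs, abs_of_pos ht0, mul_pow]
      ring
    have hlt : ‖x + t • v - c‖^2 < 1 := by
      rw [hsq, hwv]
      have b1 : t^2 * ‖v‖^2 ≤ t^2 * (9/4) := mul_le_mul_of_nonneg_left hvnorm2 (sq_nonneg t)
      have b2 : t*t ≤ t*(ε/4) := mul_le_mul_of_nonneg_left htε ht0.le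
      nlinarith only [mul_nonneg ht0.le ha, b1, b2, ht0, hε0, htε]
    nlinarith only [norm_nonneg (x + t • v - c), hlt]
  · -- half space
    have happ : (x + t • v) (Fin.last n) = x (Fin.last n) + t * v (Fin.last n) := by
      simp [PiLp.add_apply, PiLp.smul_apply]
    rw [happ]
    have hvl : |v (Fin.last n)| ≤ 3/2 := by
      rw [← hcoord v]
      calc |⟪e, v⟫| ≤ ‖e‖ * ‖v‖ := abs_real_inner_le_norm e v
        _ ≤ 3/2 := by rw [hen]; nlinarith only [hvnorm, hε1]
    have : t * v (Fin.last n) ≥ t * (-(3/2)) :=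
      mul_le_mul_of_nonneg_left (by linarith [neg_abs_le (v (Fin.last n))]) ht0.le
    linarith only [this, htx, hx0, ht0]

set_option maxHeartbeats 1000000 in
private lemma stmt17_caseB (n : ℕ) (τ₀ : ℝ) (hτ₀0 : 0 < τ₀) (hτ₀1 : τ₀ ≤ 1)
    (γ : ℝ) (hγdef : γ = τ₀^2/100) (hγ0 : 0 < γ)
    (ν₀ : EuclideanSpace ℝ (Fin (n+1))) (hν₀ : ‖ν₀‖ = 1)
    (x c e w : EuclideanSpace ℝ (Fin (n+1)))
    (hen : ‖e‖ = 1) (hee : ⟪e, e⟫ = 1)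
    (hcoord : ∀ z : EuclideanSpace ℝ (Fin (n+1)), ⟪e, z⟫ = z (Fin.last n))
    (hwdef : w = c - x) (hw : ‖w‖ = 1) (hww : ⟪w, w⟫ = 1)
    (hew0 : ⟪e, w⟫ = 1 - γ) (hx0 : (0:ℝ) = x (Fin.last n)) :
    ∃ y : EuclideanSpace ℝ (Fin (n+1)),
      (1-τ₀) * ‖y - x‖ < |⟪y - x, ν₀⟫| ∧ y ∈ Metric.ball c 1 ∧ 0 < y (Fin.last n) := by
  obtain ⟨u, hudef⟩ : ∃ u : EuclideanSpace ℝ (Fin (n+1)), u = w + e := ⟨_, rfl⟩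
  have huu : ‖u‖^2 = 4 - 2*γ := by
    rw [hudef, norm_add_sq_real, hw, hen, real_inner_comm, hew0]; ring
  have hun : ‖u‖ ≤ 2 := by nlinarith only [norm_nonneg u, hγ0, huu]
  obtain ⟨ν, hν1, hq0, habs⟩ := stmt17_flip n ν₀ hν₀ u
  have hνν : ⟪ν, ν⟫ = 1 := by rw [real_inner_self_eq_norm_sq, hν1]; norm_num
  have hq2 : ⟪u, ν⟫ ≤ 2 := by
    calc ⟪u, ν⟫ ≤ ‖u‖ * ‖ν‖ := real_inner_le_norm u ν
      _ ≤ 2 := by rw [hν1]; linarith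
  obtain ⟨q, hqdef⟩ : ∃ q : ℝ, q = ⟪u, ν⟫ := ⟨_, rfl⟩
  rw [← hqdef] at hq0 hq2
  obtain ⟨m, hmdef⟩ : ∃ m : EuclideanSpace ℝ (Fin (n+1)), m = u - q • ν := ⟨_, rfl⟩
  have hνm : ⟪ν, m⟫ = 0 := by
    rw [hmdef, inner_sub_right, real_inner_smul_right, hνν, real_inner_comm, ← hqdef]; ring
  have hmν : ⟪m, ν⟫ = 0 := by rw [real_inner_comm]; exact hνm
  have hm2 : ‖m‖^2 = ‖u‖^2 - q^2 := by
    rw [hmdef, norm_sub_sq_real, real_inner_smul_right, ← hqdef, norm_smul,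
      Real.norm_eq_abs, abs_of_nonneg hq0, mul_pow, hν1]
    ring
  have hm4 : ‖m‖^2 ≤ 4 := by rw [hm2, huu]; nlinarith only [sq_nonneg q, hγ0]
  have hm0 : (0:ℝ) ≤ ‖m‖^2 := sq_nonneg _
  obtain ⟨μ, hμdef⟩ : ∃ μ : ℝ, μ = 1 + 2/τ₀ := ⟨_, rfl⟩
  have hμ3 : 3 ≤ μ := by
    rw [hμdef]
    have : 2 ≤ 2/τ₀ := by rw [le_div_iff₀ hτ₀0]; linarith
    linarith
  obtain ⟨v, hvdef⟩ : ∃ v : EuclideanSpace ℝ (Fin (n+1)), v = μ • ν + m := ⟨_, rfl⟩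
  have hvν : ⟪v, ν⟫ = μ := by
    rw [hvdef, inner_add_left, real_inner_smul_left, hνν, hmν]; ring
  have hv2 : ‖v‖^2 = μ^2 + ‖m‖^2 := by
    rw [hvdef, norm_add_sq_real, real_inner_smul_left, hνm, norm_smul,
      Real.norm_eq_abs, abs_of_pos (by linarith : (0:ℝ) < μ), mul_pow, hν1]
    ring
  have hcone : (1-τ₀) * ‖v‖ < μ :=
    stmt17_cone τ₀ μ (‖m‖^2) ‖v‖ hτ₀0 hτ₀1 hμdef hm0 hm4 (norm_nonneg v) hv2
  have key : ∀ z : EuclideanSpace ℝ (Fin (n+1)), ‖z‖ = 1 → ⟪z, u⟫ = 2 - γ →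
      0 < (μ - q) * ⟪z, ν⟫ + (2 - γ) := by
    intro z hz hzu
    refine stmt17_keyB τ₀ γ μ q ⟪z, ν⟫ hτ₀0 hτ₀1 hγdef hμdef hq0 hq2 ?_
    have h1 : ⟪z, ν⟫ - q/2 = ⟪z - (1/2 : ℝ) • u, ν⟫ := by
      rw [inner_sub_left, real_inner_smul_left, ← hqdef]; ring
    have h2 : ‖z - (1/2 : ℝ) • u‖^2 = γ/2 := by
      rw [norm_sub_sq_real, real_inner_smul_right, hzu, norm_smul, Real.norm_eq_abs,
        mul_pow, huu, hz]
      norm_num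
      ring
    have h3 := abs_real_inner_le_norm (z - (1/2 : ℝ) • u) ν
    rw [hν1, mul_one] at h3
    have h4 : ⟪z - (1/2 : ℝ) • u, ν⟫^2 ≤ ‖z - (1/2 : ℝ) • u‖^2 := by
      nlinarith only [sq_abs ⟪z - (1/2 : ℝ) • u, ν⟫, abs_nonneg ⟪z - (1/2 : ℝ) • u, ν⟫, h3]
    rw [h1]
    linarith [h4, h2.le, h2.ge]
  have hwu : ⟪w, u⟫ = 2 - γ := by
    rw [hudef, inner_add_right, hww, real_inner_comm, hew0]; ring
  have heu : ⟪e, u⟫ = 2 - γ := by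
    rw [hudef, inner_add_right, hee, hew0]; ring
  have hwv : ⟪w, v⟫ = (μ - q) * ⟪w, ν⟫ + (2 - γ) := by
    rw [hvdef, inner_add_right, real_inner_smul_right, hmdef, inner_sub_right,
      real_inner_smul_right, hwu]
    ring
  have hev : ⟪e, v⟫ = (μ - q) * ⟪e, ν⟫ + (2 - γ) := by
    rw [hvdef, inner_add_right, real_inner_smul_right, hmdef, inner_sub_right,
      real_inner_smul_right, heu]
    ring
  have hwvpos : 0 < ⟪w, v⟫ := by rw [hwv]; exact key w hw hwu
  have hevpos : 0 < ⟪e, v⟫ := by rw [hev]; exact key e hen heu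
  have hv2pos : 0 < ‖v‖^2 := by rw [hv2]; nlinarith only [hμ3, hm0]
  obtain ⟨t, htdef⟩ : ∃ t : ℝ, t = ⟪w, v⟫ / ‖v‖^2 := ⟨_, rfl⟩
  have ht0 : 0 < t := by rw [htdef]; exact div_pos hwvpos hv2pos
  have htQ : t * ‖v‖^2 = ⟪w, v⟫ := by rw [htdef]; exact div_mul_cancel₀ _ (ne_of_gt hv2pos)
  refine ⟨x + t • v, ?_, ?_, ?_⟩
  · -- cone
    have hyx : x + t • v - x = t • v := by abel
    rw [hyx, ← habs]
    have h1 : |⟪t • v, ν⟫| = t * μ := by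
      rw [real_inner_smul_left, hvν, abs_of_pos (mul_pos ht0 (by linarith))]
    rw [h1, norm_smul, Real.norm_eq_abs, abs_of_pos ht0]
    calc (1-τ₀) * (t * ‖v‖) = t * ((1-τ₀) * ‖v‖) := by ring
      _ < t * μ := by exact mul_lt_mul_of_pos_left hcone ht0
  · -- ball
    rw [Metric.mem_ball, dist_eq_norm]
    have hyc : x + t • v - c = -w + t • v := by rw [hwdef]; abel
    have hsq : ‖x + t • v - c‖^2 = 1 - 2*t*⟪w,v⟫ + t^2*‖v‖^2 := by
      rw [hyc, norm_add_sq_real, real_inner_smul_right, inner_neg_left, norm_neg, hw,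
        norm_smul, Real.norm_eq_abs, abs_of_pos ht0, mul_pow]
      ring
    have hlt : ‖x + t • v - c‖^2 < 1 := by
      rw [hsq]
      have : t^2 * ‖v‖^2 = t * ⟪w, v⟫ := by rw [pow_two, mul_assoc, htQ]
      linarith only [this, mul_pos ht0 hwvpos]
    nlinarith only [norm_nonneg (x + t • v - c), hlt]
  · -- half space
    have happ : (x + t • v) (Fin.last n) = x (Fin.last n) + t * v (Fin.last n) := by
      simp [PiLp.add_apply, PiLp.smul_apply]
    rw [happ, ← hx0, ← hcoord v]
    simpa using mul_pos ht0 hevpos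

theorem stmt17 (n : ℕ) (hn : 1 ≤ n)
    (ν₀ : EuclideanSpace ℝ (Fin (n + 1))) (hν₀ : ‖ν₀‖ = 1)
    (τ₀ : ℝ) (hτ₀0 : 0 < τ₀) (hτ₀1 : τ₀ ≤ 1) :
    ∃ γ : ℝ, 0 < γ ∧ γ < 1 ∧
      ∀ x : EuclideanSpace ℝ (Fin (n + 1)),
        x ∈ Metric.sphere ((1 - γ) • EuclideanSpace.single (Fin.last n) (1 : ℝ)) 1 →
        0 ≤ x (Fin.last n) →
        0 < volume ({y : EuclideanSpace ℝ (Fin (n + 1)) |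
            (1 - τ₀) * ‖y - x‖ ≤ abs ⟪y - x, ν₀⟫} ∩
          Metric.ball ((1 - γ) • EuclideanSpace.single (Fin.last n) (1 : ℝ)) 1 ∩
          {y | 0 < y (Fin.last n)}) := by
  have hγ0 : (0:ℝ) < τ₀^2/100 := by positivity
  have hγ1 : τ₀^2/100 < 1 := by nlinarith
  refine ⟨τ₀^2/100, hγ0, hγ1, ?_⟩
  intro x hx hxN
  apply stmt17_pos
  set γ : ℝ := τ₀^2/100 with hγdef
  set e : EuclideanSpace ℝ (Fin (n+1)) := EuclideanSpace.single (Fin.last n) (1:ℝ) with hedef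
  set c : EuclideanSpace ℝ (Fin (n+1)) := (1-γ) • e with hcdef
  clear_value γ e c
  have hcoord : ∀ z : EuclideanSpace ℝ (Fin (n+1)), ⟪e, z⟫ = z (Fin.last n) := by
    intro z; rw [hedef, EuclideanSpace.inner_single_left]; simp
  have hen : ‖e‖ = 1 := by rw [hedef, EuclideanSpace.norm_single]; norm_num
  have hee : ⟪e, e⟫ = 1 := by rw [real_inner_self_eq_norm_sq, hen]; norm_num
  obtain ⟨w, hwdef⟩ : ∃ w : EuclideanSpace ℝ (Fin (n+1)), w = c - x := ⟨_, rfl⟩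
  have hw : ‖w‖ = 1 := by
    rw [hwdef, norm_sub_rev]; rwa [mem_sphere_iff_norm] at hx
  have hww : ⟪w, w⟫ = 1 := by rw [real_inner_self_eq_norm_sq, hw]; norm_num
  have hew : ⟪e, w⟫ = 1 - γ - x (Fin.last n) := by
    rw [hwdef, inner_sub_right, hcdef, real_inner_smul_right, hee, hcoord]; ring
  rcases lt_or_eq_of_le hxN with hx0 | hx0
  · exact stmt17_caseA n τ₀ hτ₀0 hτ₀1 ν₀ hν₀ x c e w hen hcoord hwdef hw hww hx0
  · have hew0 : ⟪e, w⟫ = 1 - γ := by rw [hew, ← hx0]; ring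
    exact stmt17_caseB n τ₀ hτ₀0 hτ₀1 γ hγdef hγ0 ν₀ hν₀ x c e w hen hee hcoord hwdef hw hww hew0 hx0
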